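/- arXiv:2512.11453 — 2 statements merged into one kernel-verified Lean document; each statement's English description precedes it below -/
import Mathlib

section
/- Let f : ℝⁿ → ℝ be differentiable with L-Lipschitz gradient and bounded below by f*. Suppose ω^{t+1} = ω^t - γ g^t with g^t = ∇f(ω^t) + e^t, γ ∈ (0, 1/L], and ‖e^t‖ ≤ ε for all t. Then min_{0 ≤ t < T} ‖∇f(ω^t)‖² ≤ 2(f(ω^0) - f*)/(γ T) + ε². -/
open Finset

lemma descent_lemma {n : ℕ} (f : EuclideanSpace ℝ (Fin n) → ℝ)
    (f' : EuclideanSpace ℝ (Fin n) → EuclideanSpace ℝ (Fin n))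
    (hdiff : ∀ x, HasGradientAt f (f' x) x)
    (L : ℝ) (hLip : ∀ x y, ‖f' x - f' y‖ ≤ L * ‖x - y‖)
    (x v : EuclideanSpace ℝ (Fin n)) :
    f (x + v) ≤ f x + inner ℝ (f' x) v + L / 2 * ‖v‖ ^ 2 := by
  set φ : ℝ → ℝ := fun s => f (x + s • v) - s * inner ℝ (f' x) v - L / 2 * s ^ 2 * ‖v‖ ^ 2 with hφdef
  have hφ : ∀ s : ℝ, HasDerivAt φ
      ((inner ℝ (f' (x + s • v)) v : ℝ) - inner ℝ (f' x) v - L * s * ‖v‖ ^ 2) s := by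
    intro s
    have h1 : HasDerivAt (fun s : ℝ => x + s • v) v s := by
      simpa using ((hasDerivAt_id s).smul_const v).const_add x
    have h2 := ((hdiff (x + s • v)).hasFDerivAt).comp_hasDerivAt s h1
    have h2' : HasDerivAt (fun s : ℝ => f (x + s • v)) (inner ℝ (f' (x + s • v)) v : ℝ) s := by
      have := h2; simp [InnerProductSpace.toDual_apply_apply] at this; exact this
    have h3 : HasDerivAt (fun s : ℝ => s * (inner ℝ (f' x) v : ℝ)) (inner ℝ (f' x) v : ℝ) s := by
      simpa using (hasDerivAt_id s).mul_const (inner ℝ (f' x) v : ℝ)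
    have h4 : HasDerivAt (fun s : ℝ => L / 2 * s ^ 2 * ‖v‖ ^ 2) (L * s * ‖v‖ ^ 2) s := by
      have := ((hasDerivAt_pow 2 s).const_mul (L / 2)).mul_const (‖v‖ ^ 2)
      refine this.congr_deriv ?_
      ring
    exact (h2'.sub h3).sub h4
  have hmono : AntitoneOn φ (Set.Icc (0 : ℝ) 1) := by
    apply antitoneOn_of_deriv_nonpos (convex_Icc 0 1)
    · exact fun s _ => ((hφ s).differentiableAt).continuousAt.continuousWithinAt
    · intro s _
      exact ((hφ s).differentiableAt).differentiableWithinAt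
    · intro s hs
      rw [interior_Icc] at hs
      rw [(hφ s).deriv]
      have hb : (inner ℝ (f' (x + s • v)) v : ℝ) - inner ℝ (f' x) v ≤ L * s * ‖v‖ ^ 2 := by
        have h1 : (inner ℝ (f' (x + s • v)) v : ℝ) - inner ℝ (f' x) v
            = inner ℝ (f' (x + s • v) - f' x) v := by rw [inner_sub_left]
        rw [h1]
        calc (inner ℝ (f' (x + s • v) - f' x) v : ℝ)
            ≤ ‖f' (x + s • v) - f' x‖ * ‖v‖ := real_inner_le_norm _ _
          _ ≤ (L * ‖(x + s • v) - x‖) * ‖v‖ := by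
              apply mul_le_mul_of_nonneg_right (hLip _ _) (norm_nonneg _)
          _ = L * s * ‖v‖ ^ 2 := by
              rw [show (x + s • v) - x = s • v by abel, norm_smul,
                Real.norm_eq_abs, abs_of_pos hs.1]
              ring
      linarith
  have h01 := hmono (Set.mem_Icc.mpr ⟨le_refl 0, zero_le_one⟩)
    (Set.mem_Icc.mpr ⟨zero_le_one, le_refl 1⟩) zero_le_one
  simp only [hφdef, zero_smul, add_zero, one_smul] at h01
  -- h01 : φ 1 ≤ φ 0
  nlinarith [h01]

theorem biased_gradient_descent_rate
    {n : ℕ} (f : EuclideanSpace ℝ (Fin n) → ℝ)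
    (f' : EuclideanSpace ℝ (Fin n) → EuclideanSpace ℝ (Fin n))
    (hdiff : ∀ x, HasGradientAt f (f' x) x)
    (L : ℝ) (hLip : ∀ x y, ‖f' x - f' y‖ ≤ L * ‖x - y‖)
    (fstar : ℝ) (hlb : ∀ x, fstar ≤ f x)
    (γ : ℝ) (hγ : 0 < γ) (hγL : γ ≤ 1 / L)
    (ω : ℕ → EuclideanSpace ℝ (Fin n))
    (e : ℕ → EuclideanSpace ℝ (Fin n))
    (g : ℕ → EuclideanSpace ℝ (Fin n))
    (hg : ∀ t, g t = f' (ω t) + e t)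
    (hupd : ∀ t, ω (t + 1) = ω t - γ • g t)
    (ε : ℝ) (hε : ∀ t, ‖e t‖ ≤ ε)
    (T : ℕ) (hT : 0 < T) :
    ∃ t < T, ‖f' (ω t)‖ ^ 2 ≤ 2 * (f (ω 0) - fstar) / (γ * T) + ε ^ 2 := by
  have hL : 0 < L := by
    rcases lt_trichotomy L 0 with h | h | h
    · have : (1 : ℝ) / L < 0 := div_neg_of_pos_of_neg one_pos h
      linarith
    · rw [h] at hγL; simp at hγL; linarith
    · exact h
  have hγL' : γ * L ≤ 1 := by
    rw [le_div_iff₀ hL] at hγL; linarith [hγL]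
  -- per-step descent
  have step : ∀ t, γ / 2 * ‖f' (ω t)‖ ^ 2 ≤ f (ω t) - f (ω (t + 1)) + γ / 2 * ε ^ 2 := by
    intro t
    have hd := descent_lemma f f' hdiff L hLip (ω t) (-(γ • g t))
    have hupd' : ω (t + 1) = ω t + -(γ • g t) := by rw [hupd t]; abel
    rw [← hupd'] at hd
    have hnorm : ‖-(γ • g t)‖ ^ 2 = γ ^ 2 * ‖g t‖ ^ 2 := by
      rw [norm_neg, norm_smul, Real.norm_eq_abs, abs_of_pos hγ]; ring
    have hinner : (inner ℝ (f' (ω t)) (-(γ • g t)) : ℝ) = -(γ * inner ℝ (f' (ω t)) (g t)) := by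
      rw [inner_neg_right, inner_smul_right]
    rw [hnorm, hinner] at hd
    have hid : ‖e t‖ ^ 2 = ‖g t‖ ^ 2 - 2 * inner ℝ (f' (ω t)) (g t) + ‖f' (ω t)‖ ^ 2 := by
      have : e t = g t - f' (ω t) := by rw [hg t]; abel
      rw [this, norm_sub_sq_real, real_inner_comm]
    have heps : ‖e t‖ ^ 2 ≤ ε ^ 2 := by
      have h0 := norm_nonneg (e t)
      nlinarith [hε t]
    nlinarith [sq_nonneg ‖g t‖, hγ.le, mul_le_mul_of_nonneg_right hγL'
      (mul_nonneg (mul_nonneg hγ.le (by norm_num : (0:ℝ) ≤ 1/2)) (sq_nonneg ‖g t‖))]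
  -- telescoping sum
  have hsum : γ / 2 * ∑ t ∈ range T, ‖f' (ω t)‖ ^ 2
      ≤ f (ω 0) - fstar + T * (γ / 2 * ε ^ 2) := by
    calc γ / 2 * ∑ t ∈ range T, ‖f' (ω t)‖ ^ 2
        = ∑ t ∈ range T, γ / 2 * ‖f' (ω t)‖ ^ 2 := by rw [mul_sum]
      _ ≤ ∑ t ∈ range T, (f (ω t) - f (ω (t + 1)) + γ / 2 * ε ^ 2) :=
          sum_le_sum fun t _ => step t
      _ = (f (ω 0) - f (ω T)) + T * (γ / 2 * ε ^ 2) := by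
          rw [sum_add_distrib, Finset.sum_range_sub' (fun t => f (ω t)), sum_const,
            card_range, nsmul_eq_mul]
      _ ≤ f (ω 0) - fstar + T * (γ / 2 * ε ^ 2) := by linarith [hlb (ω T)]
  -- pick the minimizer
  obtain ⟨t0, ht0, hmin⟩ := Finset.exists_min_image (range T) (fun t => ‖f' (ω t)‖ ^ 2)
    ⟨0, mem_range.mpr hT⟩
  refine ⟨t0, mem_range.mp ht0, ?_⟩
  have hTsum : (T : ℝ) * ‖f' (ω t0)‖ ^ 2 ≤ ∑ t ∈ range T, ‖f' (ω t)‖ ^ 2 := by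
    calc (T : ℝ) * ‖f' (ω t0)‖ ^ 2 = ∑ _t ∈ range T, ‖f' (ω t0)‖ ^ 2 := by
          rw [sum_const, card_range, nsmul_eq_mul]
      _ ≤ ∑ t ∈ range T, ‖f' (ω t)‖ ^ 2 := sum_le_sum fun t ht => hmin t ht
  have hTpos : (0 : ℝ) < T := Nat.cast_pos.mpr hT
  have hc : (0 : ℝ) < γ * T / 2 := by positivity
  rw [show 2 * (f (ω 0) - fstar) / (γ * T) + ε ^ 2
      = (f (ω 0) - fstar + T * (γ / 2 * ε ^ 2)) / (γ * T / 2) by field_simp]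
  rw [le_div_iff₀ hc]
  nlinarith [mul_le_mul_of_nonneg_left hTsum (by positivity : (0:ℝ) ≤ γ / 2)]
end

section
/- Combining the contraction error and the biased gradient descent bound: suppose the meta-objective L(ω) is L_total-smooth and lower bounded, and at each outer step t the gradient estimate satisfies ‖g^t - ∇L(ω^t)‖ ≤ L_x D₀ (1-α)^K. Then with step size γ ∈ (0, 1/L_total], min_{0 ≤ t < T} ‖∇L(ω^t)‖² ≤ 2(L(ω^0) - L*)/(γ T) + L_x² D₀² (1-α)^{2K}. -/
open InnerProductSpace intervalIntegral

lemma my_descent {m : ℕ} (L : EuclideanSpace ℝ (Fin m) → ℝ)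
    (L' : EuclideanSpace ℝ (Fin m) → EuclideanSpace ℝ (Fin m))
    (hdiff : ∀ x, HasGradientAt L (L' x) x)
    (Ltotal : ℝ) (hLt : 0 ≤ Ltotal)
    (hLip : ∀ x y, ‖L' x - L' y‖ ≤ Ltotal * ‖x - y‖)
    (x y : EuclideanSpace ℝ (Fin m)) :
    L y ≤ L x + inner ℝ (L' x) (y - x) + Ltotal / 2 * ‖y - x‖ ^ 2 := by
  have hL'cont : Continuous L' := by
    have : LipschitzWith (Real.toNNReal Ltotal) L' := by
      apply LipschitzWith.of_dist_le_mul
      intro a b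
      rw [dist_eq_norm, dist_eq_norm, Real.coe_toNNReal _ hLt]
      exact hLip a b
    exact this.continuous
  set p : ℝ → EuclideanSpace ℝ (Fin m) := fun t => x + t • (y - x) with hp
  have hpcont : Continuous p := by continuity
  have hderiv : ∀ t : ℝ, HasDerivAt (fun s => L (p s))
      (inner ℝ (L' (p t)) (y - x) : ℝ) t := by
    intro t
    have h1 : HasDerivAt p (y - x) t := by
      simpa [hp] using ((hasDerivAt_id t).smul_const (y - x)).const_add x
    have h2 := (hdiff (p t)).hasFDerivAt.comp_hasDerivAt t h1
    simp [InnerProductSpace.toDual_apply_apply] at h2; exact h2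
  have hcont : Continuous fun t : ℝ => (inner ℝ (L' (p t)) (y - x) : ℝ) :=
    (continuous_inner.comp ((hL'cont.comp hpcont).prodMk continuous_const))
  have hFTC : L (p 1) - L (p 0) = ∫ t in (0:ℝ)..1, inner ℝ (L' (p t)) (y - x) :=
    (intervalIntegral.integral_eq_sub_of_hasDerivAt (fun t _ => hderiv t)
      (hcont.intervalIntegrable 0 1)).symm
  have hbound : ∀ t ∈ Set.Icc (0:ℝ) 1,
      (inner ℝ (L' (p t)) (y - x) : ℝ) ≤ inner ℝ (L' x) (y - x) + Ltotal * t * ‖y - x‖ ^ 2 := by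
    intro t ht
    have h1 : (inner ℝ (L' (p t)) (y - x) : ℝ) - inner ℝ (L' x) (y - x)
        = inner ℝ (L' (p t) - L' x) (y - x) := by rw [inner_sub_left]
    have h2 : (inner ℝ (L' (p t) - L' x) (y - x) : ℝ) ≤ ‖L' (p t) - L' x‖ * ‖y - x‖ :=
      real_inner_le_norm _ _
    have h3 : ‖L' (p t) - L' x‖ ≤ Ltotal * (t * ‖y - x‖) := by
      have := hLip (p t) x
      have hpx : p t - x = t • (y - x) := by
        show x + t • (y - x) - x = t • (y - x); abel
      rw [hpx] at this
      simpa [norm_smul, abs_of_nonneg ht.1, mul_assoc] using this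
    nlinarith [norm_nonneg (y - x), mul_le_mul_of_nonneg_right h3 (norm_nonneg (y - x))]
  have hint : (∫ t in (0:ℝ)..1, (inner ℝ (L' (p t)) (y - x) : ℝ))
      ≤ ∫ t in (0:ℝ)..1, (inner ℝ (L' x) (y - x) + Ltotal * t * ‖y - x‖ ^ 2) := by
    apply intervalIntegral.integral_mono_on (by norm_num)
      (hcont.intervalIntegrable 0 1)
      ((by continuity : Continuous fun t : ℝ => (inner ℝ (L' x) (y - x) : ℝ) + Ltotal * t * ‖y - x‖ ^ 2).intervalIntegrable 0 1)
    exact hbound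
  have hval : (∫ t in (0:ℝ)..1, ((inner ℝ (L' x) (y - x) : ℝ) + Ltotal * t * ‖y - x‖ ^ 2))
      = inner ℝ (L' x) (y - x) + Ltotal / 2 * ‖y - x‖ ^ 2 := by
    have heq : (fun t : ℝ => (inner ℝ (L' x) (y - x) : ℝ) + Ltotal * t * ‖y - x‖ ^ 2)
        = fun t : ℝ => (inner ℝ (L' x) (y - x) : ℝ) + (Ltotal * ‖y - x‖ ^ 2) * t := by
      funext t; ring
    rw [heq, intervalIntegral.integral_add
      ((continuous_const : Continuous fun _ : ℝ => (inner ℝ (L' x) (y - x) : ℝ)).intervalIntegrable 0 1)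
      ((by fun_prop : Continuous fun t : ℝ => (Ltotal * ‖y - x‖ ^ 2) * t).intervalIntegrable 0 1),
      intervalIntegral.integral_const_mul, intervalIntegral.integral_const,
      integral_id]
    simp; ring
  have hfin := hint.trans_eq hval
  rw [← hFTC] at hfin
  have hp0 : p 0 = x := by simp [hp]
  have hp1 : p 1 = y := by simp [hp]
  rw [hp0, hp1] at hfin
  linarith

theorem l2e_meta_convergence_rate
    {m : ℕ} (L : EuclideanSpace ℝ (Fin m) → ℝ)
    (L' : EuclideanSpace ℝ (Fin m) → EuclideanSpace ℝ (Fin m))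
    (hdiff : ∀ x, HasGradientAt L (L' x) x)
    (Ltotal : ℝ) (hLip : ∀ x y, ‖L' x - L' y‖ ≤ Ltotal * ‖x - y‖)
    (Lstar : ℝ) (hlb : ∀ x, Lstar ≤ L x)
    (Lx D₀ : ℝ) (hLx : 0 ≤ Lx) (hD₀ : 0 ≤ D₀)
    (α : ℝ) (hα : α ∈ Set.Ioc (0 : ℝ) 1) (K : ℕ)
    (γ : ℝ) (hγ : 0 < γ) (hγL : γ ≤ 1 / Ltotal)
    (ω : ℕ → EuclideanSpace ℝ (Fin m))
    (g : ℕ → EuclideanSpace ℝ (Fin m))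
    (herr : ∀ t, ‖g t - L' (ω t)‖ ≤ Lx * D₀ * (1 - α) ^ K)
    (hupd : ∀ t, ω (t + 1) = ω t - γ • g t)
    (T : ℕ) (hT : 0 < T) :
    ∃ t < T, ‖L' (ω t)‖ ^ 2
      ≤ 2 * (L (ω 0) - Lstar) / (γ * T) + Lx ^ 2 * D₀ ^ 2 * (1 - α) ^ (2 * K) := by
  have hLt : 0 < Ltotal := by
    by_contra h
    push_neg at h
    have : 1 / Ltotal ≤ 0 := one_div_nonpos.mpr h
    linarith
  set ε : ℝ := Lx * D₀ * (1 - α) ^ K with hε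
  have hεnn : 0 ≤ ε := by
    have : (0:ℝ) ≤ (1 - α) ^ K := pow_nonneg (by linarith [hα.2]) K
    positivity
  -- per-step descent
  have step : ∀ t, L (ω (t + 1)) ≤ L (ω t) - γ / 2 * ‖L' (ω t)‖ ^ 2 + γ / 2 * ε ^ 2 := by
    intro t
    have hd := my_descent L L' hdiff Ltotal hLt.le hLip (ω t) (ω (t + 1))
    have hdiffpt : ω (t + 1) - ω t = -(γ • g t) := by rw [hupd t]; abel
    rw [hdiffpt] at hd
    have hinner : (inner ℝ (L' (ω t)) (-(γ • g t)) : ℝ)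
        = -(γ * inner ℝ (L' (ω t)) (g t)) := by
      rw [inner_neg_right, real_inner_smul_right]
    have hnorm : ‖-(γ • g t)‖ ^ 2 = γ ^ 2 * ‖g t‖ ^ 2 := by
      rw [norm_neg, norm_smul]
      simp [abs_of_pos hγ]
      ring
    rw [hinner, hnorm] at hd
    have hLγ : Ltotal * γ ≤ 1 := by
      rw [← le_div_iff₀' hLt]
      exact hγL
    have hid : ‖g t - L' (ω t)‖ ^ 2
        = ‖g t‖ ^ 2 - 2 * inner ℝ (L' (ω t)) (g t) + ‖L' (ω t)‖ ^ 2 := by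
      rw [norm_sub_sq_real, real_inner_comm]
    have hsq : ‖g t - L' (ω t)‖ ^ 2 ≤ ε ^ 2 :=
      pow_le_pow_left₀ (norm_nonneg _) (herr t) 2
    nlinarith [sq_nonneg (γ * ‖g t‖), norm_nonneg (g t), sq_nonneg ‖g t‖]
  -- summation
  have hsum : ∀ n : ℕ, γ / 2 * (∑ t ∈ Finset.range n, ‖L' (ω t)‖ ^ 2)
      ≤ L (ω 0) - L (ω n) + n * (γ / 2 * ε ^ 2) := by
    intro n
    induction n with
    | zero => simp
    | succ n ih =>
      rw [Finset.sum_range_succ, Nat.cast_succ]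
      have := step n
      nlinarith
  have hsumT := hsum T
  have hlbT := hlb (ω T)
  -- minimum
  obtain ⟨t0, ht0mem, ht0min⟩ := Finset.exists_min_image (Finset.range T)
    (fun t => ‖L' (ω t)‖ ^ 2) ⟨0, Finset.mem_range.mpr hT⟩
  refine ⟨t0, Finset.mem_range.mp ht0mem, ?_⟩
  have hTmin : (T : ℝ) * ‖L' (ω t0)‖ ^ 2 ≤ ∑ t ∈ Finset.range T, ‖L' (ω t)‖ ^ 2 := by
    calc (T : ℝ) * ‖L' (ω t0)‖ ^ 2 = ∑ _t ∈ Finset.range T, ‖L' (ω t0)‖ ^ 2 := by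
          simp [mul_comm]
      _ ≤ ∑ t ∈ Finset.range T, ‖L' (ω t)‖ ^ 2 :=
          Finset.sum_le_sum fun t ht => ht0min t ht
  have hγT : 0 < γ * (T : ℝ) := mul_pos hγ (by exact_mod_cast hT)
  have hεsq : Lx ^ 2 * D₀ ^ 2 * (1 - α) ^ (2 * K) = ε ^ 2 := by
    rw [hε, mul_comm 2 K, pow_mul]
    ring
  rw [hεsq]
  have key : ‖L' (ω t0)‖ ^ 2 - ε ^ 2 ≤ 2 * (L (ω 0) - Lstar) / (γ * T) := by
    rw [le_div_iff₀ hγT]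
    nlinarith
  linarith
end
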